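/- Let p be an odd prime and let D(ρ) = p^{−n} Σ_P |tr(Pρ)| be the stabilizer norm of an n-qudit pure state ρ = |ψ⟩⟨ψ| (sum over phase-free Paulis), and let R(ρ) = min{ Σ_j |c_j| : ρ = Σ_j c_j σ_j, σ_j stabilizer states, c_j ∈ R } be the robustness of magic. Then D(ρ) ≤ R(ρ). Consequently M_{(1/2,p)}(|ψ⟩) ≤ 2 log_p R(|ψ⟩⟨ψ|), i.e., R(|ψ⟩⟨ψ|)² ≥ p^{M_{(1/2,p)}(|ψ⟩)}. -/

import Mathlib

open Matrix

/-- The `p`-th root of unity `ω = e^{2πi/p}`. -/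
noncomputable def omega (p : ℕ) : ℂ := Complex.exp (2 * Real.pi * Complex.I / p)

/-- The `n`-qudit Pauli operator `X(x)Z(z)`, acting as
`X(x)Z(z)|j⟩ = ω^{z·j} |j + x⟩`. -/
noncomputable def XZ (p n : ℕ) (x z : Fin n → ZMod p) :
    Matrix (Fin n → ZMod p) (Fin n → ZMod p) ℂ :=
  fun i j => if i = x + j then omega p ^ (∑ k, z k * j k : ZMod p).val else 0

/-- `Ξ_P(|ψ⟩) = p^{−n} |⟨ψ|P|ψ⟩|²` for the phase-free Pauli `P = X(x)Z(z)`. -/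
noncomputable def Xi (p n : ℕ) [NeZero p] (ψ : (Fin n → ZMod p) → ℂ)
    (x z : Fin n → ZMod p) : ℝ :=
  (1 / (p : ℝ) ^ n) * ‖star ψ ⬝ᵥ (XZ p n x z).mulVec ψ‖ ^ 2

/-- The stabilizer α-Rényi entropy
`M_{(α,p)}(|ψ⟩) = (1/(1−α)) log_p Σ_P Ξ_P^α(|ψ⟩) − n`. -/
noncomputable def Mren (p : ℕ) [NeZero p] (α : ℝ) (n : ℕ)
    (ψ : (Fin n → ZMod p) → ℂ) : ℝ :=
  (1 / (1 - α)) *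
      Real.logb p (∑ x : Fin n → ZMod p, ∑ z : Fin n → ZMod p, Xi p n ψ x z ^ α) - n

/-- The stabilizer norm `D(ρ) = p^{−n} Σ_P |tr(Pρ)|`, sum over phase-free Paulis. -/
noncomputable def stNorm (p n : ℕ) [NeZero p]
    (ρ : Matrix (Fin n → ZMod p) (Fin n → ZMod p) ℂ) : ℝ :=
  (1 / (p : ℝ) ^ n) *
    ∑ x : Fin n → ZMod p, ∑ z : Fin n → ZMod p, ‖(XZ p n x z * ρ).trace‖

/-- A pure stabilizer density matrix: `σ = |φ⟩⟨φ|` for a unit vector `|φ⟩`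
stabilized (up to phase) by exactly `p^n` phase-free Pauli operators. -/
def IsStabDM (p n : ℕ) [NeZero p]
    (σ : Matrix (Fin n → ZMod p) (Fin n → ZMod p) ℂ) : Prop :=
  ∃ φ : (Fin n → ZMod p) → ℂ, (∑ i, ‖φ i‖ ^ 2 = 1) ∧
    Nat.card {xz : (Fin n → ZMod p) × (Fin n → ZMod p) //
        ‖star φ ⬝ᵥ (XZ p n xz.1 xz.2).mulVec φ‖ = 1} = p ^ n ∧
    σ = Matrix.vecMulVec φ (star φ)

/-! ### Auxiliary lemmas -/

lemma omega_pow_p (p : ℕ) (hp : p ≠ 0) : omega p ^ p = 1 :=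
  (Complex.isPrimitiveRoot_exp p hp).pow_eq_one

lemma omega_pow_mod (p : ℕ) (hp : p ≠ 0) (m : ℕ) : omega p ^ (m % p) = omega p ^ m := by
  conv_rhs => rw [← Nat.mod_add_div m p]
  rw [pow_add, pow_mul, omega_pow_p p hp, one_pow, mul_one]

lemma omega_pow_val_add {p : ℕ} [NeZero p] (a b : ZMod p) :
    omega p ^ (a + b).val = omega p ^ a.val * omega p ^ b.val := by
  rw [← pow_add, ZMod.val_add, omega_pow_mod p (NeZero.ne p)]

lemma omega_norm (p : ℕ) (m : ℕ) : ‖omega p ^ m‖ = 1 := by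
  rw [norm_pow]
  have : (2 * Real.pi * Complex.I / p) = ((2 * Real.pi / p : ℝ)) * Complex.I := by
    push_cast; ring
  rw [omega, this, Complex.norm_exp_ofReal_mul_I, one_pow]

lemma omega_conj {p : ℕ} [NeZero p] (a : ZMod p) :
    (starRingEnd ℂ) (omega p ^ a.val) = omega p ^ (-a).val := by
  have h1 : omega p ^ a.val * omega p ^ (-a).val = 1 := by
    rw [← omega_pow_val_add, add_neg_cancel, ZMod.val_zero, pow_zero]
  have h2 : (starRingEnd ℂ) (omega p ^ a.val) * omega p ^ a.val = 1 := by
    rw [mul_comm, Complex.mul_conj']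
    norm_cast
    rw [omega_norm p, one_pow]
  calc (starRingEnd ℂ) (omega p ^ a.val)
      = (starRingEnd ℂ) (omega p ^ a.val) * (omega p ^ a.val * omega p ^ (-a).val) := by
        rw [h1, mul_one]
    _ = omega p ^ (-a).val := by rw [← mul_assoc, h2, one_mul]

lemma sum_omega_single (p : ℕ) [Fact p.Prime] (a : ZMod p) :
    ∑ z : ZMod p, omega p ^ ((z * a).val) = if a = 0 then (p : ℂ) else 0 := by
  split_ifs with h
  · simp [h, ZMod.val_zero, Finset.card_univ, ZMod.card]
  · have hprim := Complex.isPrimitiveRoot_exp p (NeZero.ne p)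
    have hbij : ∑ z : ZMod p, omega p ^ ((z * a).val) = ∑ w : ZMod p, omega p ^ w.val :=
      Fintype.sum_equiv (Equiv.mulRight₀ a h) _ _ (fun z => rfl)
    rw [hbij]
    have hval : ∑ w : ZMod p, omega p ^ w.val = ∑ i ∈ Finset.range p, omega p ^ i := by
      refine Finset.sum_nbij' (fun w => w.val) (fun i => (i : ZMod p)) ?_ ?_ ?_ ?_ ?_
      · intro w _; simpa using ZMod.val_lt w
      · intros; simp
      · intro w _; simp [ZMod.natCast_val, ZMod.cast_id]
      · intro i hi; simp only [Finset.mem_range] at hi; exact ZMod.val_natCast_of_lt hi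
      · intros; rfl
    rw [hval]
    exact hprim.geom_sum_eq_zero (Fact.out (p := p.Prime)).one_lt

lemma omega_pow_val_sum {p : ℕ} [NeZero p] {ι : Type*} [DecidableEq ι] (s : Finset ι)
    (f : ι → ZMod p) :
    omega p ^ (∑ k ∈ s, f k).val = ∏ k ∈ s, omega p ^ (f k).val := by
  induction s using Finset.induction_on with
  | empty => simp
  | insert _ _ hx ih => rw [Finset.sum_insert hx, Finset.prod_insert hx, omega_pow_val_add, ih]

lemma sum_omega_vec {p n : ℕ} [Fact p.Prime] (a : Fin n → ZMod p) :
    ∑ z : Fin n → ZMod p, omega p ^ ((∑ k, z k * a k).val)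
      = if a = 0 then (p : ℂ) ^ n else 0 := by
  have key : ∑ z : Fin n → ZMod p, omega p ^ ((∑ k, z k * a k).val)
      = ∏ k : Fin n, ∑ t : ZMod p, omega p ^ ((t * a k).val) := by
    rw [Finset.prod_univ_sum]
    exact Finset.sum_congr rfl fun z _ => omega_pow_val_sum _ _
  rw [key]
  split_ifs with h
  · have : ∀ k : Fin n, a k = 0 := fun k => congrFun h k
    simp only [sum_omega_single, this, if_pos]
    simp
  · obtain ⟨k, hk⟩ : ∃ k, a k ≠ 0 := by
      by_contra hc; push_neg at hc; exact h (funext hc)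
    apply Finset.prod_eq_zero (Finset.mem_univ k)
    rw [sum_omega_single, if_neg hk]

/-- trace of `A * |φ⟩⟨φ|` is `⟨φ|A|φ⟩`. -/
lemma trace_mul_vecMulVec {p n : ℕ} [NeZero p]
    (A : Matrix (Fin n → ZMod p) (Fin n → ZMod p) ℂ) (φ : (Fin n → ZMod p) → ℂ) :
    (A * Matrix.vecMulVec φ (star φ)).trace = star φ ⬝ᵥ A.mulVec φ := by
  simp only [Matrix.trace, Matrix.diag, Matrix.mul_apply, Matrix.vecMulVec_apply,
    Matrix.mulVec, dotProduct, Pi.star_apply, RCLike.star_def]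
  apply Finset.sum_congr rfl
  intro i _
  rw [Finset.mul_sum]
  apply Finset.sum_congr rfl
  intro j _
  ring

/-- closed form of the Pauli expectation value. -/
lemma inner_XZ {p n : ℕ} [NeZero p] (x z : Fin n → ZMod p) (φ : (Fin n → ZMod p) → ℂ) :
    star φ ⬝ᵥ (XZ p n x z).mulVec φ
      = ∑ j, (starRingEnd ℂ) (φ (x + j)) * omega p ^ (∑ k, z k * j k : ZMod p).val * φ j := by
  simp only [dotProduct, Matrix.mulVec, Pi.star_apply, RCLike.star_def, XZ]
  simp only [Finset.mul_sum, ite_mul, mul_ite, zero_mul, mul_zero]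
  rw [Finset.sum_comm]
  apply Finset.sum_congr rfl
  intro j _
  rw [Finset.sum_ite_eq' Finset.univ (x + j)
    (fun i => (starRingEnd ℂ) (φ i) * (omega p ^ (∑ k, z k * j k : ZMod p).val * φ j))]
  simp [mul_assoc]

lemma sum_z_conj_mul {p n : ℕ} [Fact p.Prime] (φ : (Fin n → ZMod p) → ℂ)
    (x : Fin n → ZMod p) :
    ∑ z : Fin n → ZMod p,
      (starRingEnd ℂ) (star φ ⬝ᵥ (XZ p n x z).mulVec φ) * (star φ ⬝ᵥ (XZ p n x z).mulVec φ)
    = (p : ℂ) ^ n *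
        ∑ j, (φ (x + j) * (starRingEnd ℂ) (φ (x + j))) * (φ j * (starRingEnd ℂ) (φ j)) := by
  have step1 : ∀ z : Fin n → ZMod p,
      (starRingEnd ℂ) (star φ ⬝ᵥ (XZ p n x z).mulVec φ) * (star φ ⬝ᵥ (XZ p n x z).mulVec φ)
      = ∑ j', ∑ j,
          (φ (x + j') * (starRingEnd ℂ) (φ j') * ((starRingEnd ℂ) (φ (x + j)) * φ j))
            * omega p ^ ((∑ k, z k * (j k - j' k)) : ZMod p).val := by
    intro z
    rw [inner_XZ, map_sum, Finset.sum_mul_sum]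
    apply Finset.sum_congr rfl; intro j' _
    apply Finset.sum_congr rfl; intro j _
    simp only [_root_.map_mul, omega_conj, Complex.conj_conj]
    have hsum : ((∑ k, z k * (j k - j' k)) : ZMod p)
        = (∑ k, z k * j k) + -(∑ k, z k * j' k) := by
      rw [← Finset.sum_neg_distrib, ← Finset.sum_add_distrib]
      apply Finset.sum_congr rfl; intros; ring
    rw [hsum, omega_pow_val_add]
    ring
  calc ∑ z : Fin n → ZMod p,
      (starRingEnd ℂ) (star φ ⬝ᵥ (XZ p n x z).mulVec φ) * (star φ ⬝ᵥ (XZ p n x z).mulVec φ)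
      = ∑ j', ∑ j,
          (φ (x + j') * (starRingEnd ℂ) (φ j') * ((starRingEnd ℂ) (φ (x + j)) * φ j))
            * ∑ z : Fin n → ZMod p, omega p ^ ((∑ k, z k * (j k - j' k)) : ZMod p).val := by
        simp only [step1]
        rw [Finset.sum_comm]
        apply Finset.sum_congr rfl; intro j' _
        rw [Finset.sum_comm]
        apply Finset.sum_congr rfl; intro j _
        rw [← Finset.mul_sum]
    _ = ∑ j', ∑ j,
          (φ (x + j') * (starRingEnd ℂ) (φ j') * ((starRingEnd ℂ) (φ (x + j)) * φ j))
            * (if j = j' then (p : ℂ) ^ n else 0) := by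
        apply Finset.sum_congr rfl; intro j' _
        apply Finset.sum_congr rfl; intro j _
        congr 1
        rw [sum_omega_vec (fun k => j k - j' k)]
        congr 1
        simp only [eq_iff_iff]
        constructor
        · intro h; funext k
          have := congrFun h k
          simpa [sub_eq_zero] using this
        · rintro rfl; funext k; simp
    _ = (p : ℂ) ^ n *
        ∑ j, (φ (x + j) * (starRingEnd ℂ) (φ (x + j))) * (φ j * (starRingEnd ℂ) (φ j)) := by
        rw [Finset.mul_sum]
        apply Finset.sum_congr rfl; intro j' _
        simp only [mul_ite, mul_zero]
        rw [Finset.sum_ite_eq' Finset.univ j']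
        simp only [Finset.mem_univ, if_pos]
        ring

/-- Parseval for the Pauli basis: `Σ_P |⟨φ|P|φ⟩|² = pⁿ ‖φ‖⁴`. -/
lemma parseval {p n : ℕ} [Fact p.Prime] (φ : (Fin n → ZMod p) → ℂ) :
    ∑ x : Fin n → ZMod p, ∑ z : Fin n → ZMod p,
      ‖star φ ⬝ᵥ (XZ p n x z).mulVec φ‖ ^ 2
    = (p : ℝ) ^ n * (∑ i, ‖φ i‖ ^ 2) ^ 2 := by
  have key : ∀ T : ℂ, ((‖T‖ ^ 2 : ℝ) : ℂ) = (starRingEnd ℂ) T * T := by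
    intro T
    rw [mul_comm, Complex.mul_conj']
    push_cast; ring
  apply Complex.ofReal_injective
  push_cast
  calc (∑ x : Fin n → ZMod p, ∑ z : Fin n → ZMod p,
        ((‖star φ ⬝ᵥ (XZ p n x z).mulVec φ‖ : ℂ)) ^ 2)
      = ∑ x : Fin n → ZMod p, ∑ z : Fin n → ZMod p,
          (starRingEnd ℂ) (star φ ⬝ᵥ (XZ p n x z).mulVec φ)
            * (star φ ⬝ᵥ (XZ p n x z).mulVec φ) := by
        apply Finset.sum_congr rfl; intro x _
        apply Finset.sum_congr rfl; intro z _
        rw [← key]; push_cast; ring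
    _ = ∑ x : Fin n → ZMod p, (p : ℂ) ^ n *
          ∑ j, (φ (x + j) * (starRingEnd ℂ) (φ (x + j))) * (φ j * (starRingEnd ℂ) (φ j)) := by
        apply Finset.sum_congr rfl; intro x _
        exact sum_z_conj_mul φ x
    _ = (p : ℂ) ^ n * ∑ j, (φ j * (starRingEnd ℂ) (φ j)) *
          ∑ x : Fin n → ZMod p, (φ (x + j) * (starRingEnd ℂ) (φ (x + j))) := by
        rw [← Finset.mul_sum, Finset.sum_comm]
        congr 1
        apply Finset.sum_congr rfl; intro j _
        rw [Finset.mul_sum]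
        apply Finset.sum_congr rfl; intro x _
        ring
    _ = (↑(p : ℝ) ^ n) * (∑ i, (‖φ i‖ : ℂ) ^ 2) ^ 2 := by
        have hterm : ∀ i, φ i * (starRingEnd ℂ) (φ i) = (‖φ i‖ : ℂ) ^ 2 := by
          intro i; rw [Complex.mul_conj']
        have hshift2 : ∀ j : Fin n → ZMod p,
            ∑ x : Fin n → ZMod p, ((‖φ (x + j)‖ : ℂ)) ^ 2 = ∑ i, (‖φ i‖ : ℂ) ^ 2 := by
          intro j
          exact Fintype.sum_equiv (Equiv.addRight j) _ _ (fun x => rfl)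
        push_cast
        congr 1
        simp only [hterm, hshift2]
        rw [← Finset.sum_mul, sq]

/-- A stabilizer state has stabilizer norm 1 (unnormalized form). -/
lemma stab_sum {p n : ℕ} [Fact p.Prime]
    (σ : Matrix (Fin n → ZMod p) (Fin n → ZMod p) ℂ) (h : IsStabDM p n σ) :
    ∑ x : Fin n → ZMod p, ∑ z : Fin n → ZMod p, ‖(XZ p n x z * σ).trace‖ = (p : ℝ) ^ n := by
  classical
  obtain ⟨φ, hφ, hcard, rfl⟩ := h
  have htr : ∀ x z : Fin n → ZMod p,
      (XZ p n x z * Matrix.vecMulVec φ (star φ)).trace = star φ ⬝ᵥ (XZ p n x z).mulVec φ :=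
    fun x z => trace_mul_vecMulVec _ _
  simp only [htr]
  -- pass to the product type
  set T : (Fin n → ZMod p) × (Fin n → ZMod p) → ℝ :=
    fun q => ‖star φ ⬝ᵥ (XZ p n q.1 q.2).mulVec φ‖ with hT
  have hprod : ∀ g : (Fin n → ZMod p) → (Fin n → ZMod p) → ℝ,
      (∑ x : Fin n → ZMod p, ∑ z : Fin n → ZMod p, g x z)
        = ∑ q : (Fin n → ZMod p) × (Fin n → ZMod p), g q.1 q.2 := by
    intro g; rw [Fintype.sum_prod_type]
  have hpars : ∑ q : (Fin n → ZMod p) × (Fin n → ZMod p), T q ^ 2 = (p : ℝ) ^ n := by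
    rw [← hprod (fun x z => ‖star φ ⬝ᵥ (XZ p n x z).mulVec φ‖ ^ 2), parseval φ, hφ]
    ring
  set A : Finset ((Fin n → ZMod p) × (Fin n → ZMod p)) :=
    Finset.univ.filter (fun q => T q = 1) with hA
  have hcardA : (A.card : ℝ) = (p : ℝ) ^ n := by
    have : Nat.card {xz : (Fin n → ZMod p) × (Fin n → ZMod p) // T xz = 1} = A.card := by
      rw [Nat.card_eq_fintype_card, Fintype.card_subtype]
    rw [← this, hcard]
    push_cast; ring
  have hsplit := Finset.sum_filter_add_sum_filter_not Finset.univ (fun q => T q = 1)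
    (fun q => T q ^ 2)
  have hA_sum : ∑ q ∈ A, T q ^ 2 = (p : ℝ) ^ n := by
    have : ∑ q ∈ A, T q ^ 2 = ∑ q ∈ A, 1 := by
      apply Finset.sum_congr rfl
      intro q hq
      rw [hA] at hq
      rw [(Finset.mem_filter.mp hq).2, one_pow]
    rw [this, Finset.sum_const, nsmul_eq_mul, mul_one, ← hcardA]
  have hcompl : ∑ q ∈ Finset.univ.filter (fun q => ¬ T q = 1), T q ^ 2 = 0 := by
    have := hsplit
    rw [hA_sum] at this
    have huniv : ∑ q ∈ Finset.univ, T q ^ 2 = (p : ℝ) ^ n := hpars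
    linarith
  have hzero : ∀ q ∈ Finset.univ.filter (fun q => ¬ T q = 1), T q = 0 := by
    intro q hq
    have hnn : ∀ r ∈ Finset.univ.filter (fun q => ¬ T q = 1), 0 ≤ T r ^ 2 :=
      fun r _ => sq_nonneg _
    have := (Finset.sum_eq_zero_iff_of_nonneg hnn).mp hcompl q hq
    exact pow_eq_zero_iff (by norm_num) |>.mp this
  rw [hprod (fun x z => ‖star φ ⬝ᵥ (XZ p n x z).mulVec φ‖)]
  have : ∑ q : (Fin n → ZMod p) × (Fin n → ZMod p), T q
      = ∑ q ∈ A, T q + ∑ q ∈ Finset.univ.filter (fun q => ¬ T q = 1), T q :=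
    (Finset.sum_filter_add_sum_filter_not Finset.univ (fun q => T q = 1) T).symm
  rw [show (∑ q : (Fin n → ZMod p) × (Fin n → ZMod p),
      ‖star φ ⬝ᵥ (XZ p n q.1 q.2).mulVec φ‖) = ∑ q, T q from rfl, this]
  rw [Finset.sum_eq_zero hzero, add_zero]
  have : ∑ q ∈ A, T q = ∑ q ∈ A, 1 := by
    apply Finset.sum_congr rfl
    intro q hq
    exact (Finset.mem_filter.mp hq).2
  rw [this, Finset.sum_const, nsmul_eq_mul, mul_one, hcardA]

/-- `X(0)Z(0)` is the identity. -/
lemma XZ_zero {p n : ℕ} [NeZero p] : XZ p n 0 0 = 1 := by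
  ext i j
  simp [XZ, Matrix.one_apply, eq_comm]

set_option maxHeartbeats 1000000
/-- the stabilizer norm lower-bounds the ℓ1-norm of any real
decomposition of a pure state into stabilizer states (hence `D(ρ) ≤ R(ρ)`);
consequently `M_{(1/2,p)}(|ψ⟩) ≤ 2 log_p R` and `R² ≥ p^{M_{(1/2,p)}(|ψ⟩)}`. -/
theorem stmt18 (p n : ℕ) [Fact p.Prime] (hodd : Odd p)
    (ψ : (Fin n → ZMod p) → ℂ) (hunit : ∑ i, ‖ψ i‖ ^ 2 = 1)
    (ι : Type) [Fintype ι] (c : ι → ℝ)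
    (σs : ι → Matrix (Fin n → ZMod p) (Fin n → ZMod p) ℂ)
    (hσ : ∀ i, IsStabDM p n (σs i))
    (hdecomp : Matrix.vecMulVec ψ (star ψ) = ∑ i, (c i : ℂ) • σs i) :
    stNorm p n (Matrix.vecMulVec ψ (star ψ)) ≤ ∑ i, |c i| ∧
    Mren p (1 / 2) n ψ ≤ 2 * Real.logb p (∑ i, |c i|) ∧
    (p : ℝ) ^ (Mren p (1 / 2) n ψ) ≤ (∑ i, |c i|) ^ 2 := by
  classical
  have hp1 : 1 < p := (Fact.out (p := p.Prime)).one_lt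
  have hpR : (1 : ℝ) < (p : ℝ) := by exact_mod_cast hp1
  have hp0 : (0 : ℝ) < (p : ℝ) := by linarith
  have hpn : (0 : ℝ) < (p : ℝ) ^ n := by positivity
  set ρ := Matrix.vecMulVec ψ (star ψ) with hρ
  set R := ∑ i, |c i| with hRdef
  -- Part 1: D(ρ) ≤ R
  have h1 : stNorm p n ρ ≤ R := by
    have hbound : ∀ x z : Fin n → ZMod p,
        ‖(XZ p n x z * ρ).trace‖ ≤ ∑ i, |c i| * ‖(XZ p n x z * σs i).trace‖ := by
      intro x z
      have : (XZ p n x z * ρ).trace = ∑ i, (c i : ℂ) * (XZ p n x z * σs i).trace := by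
        rw [hdecomp, Finset.mul_sum, Matrix.trace_sum]
        apply Finset.sum_congr rfl
        intro i _
        rw [Matrix.mul_smul, Matrix.trace_smul, smul_eq_mul]
      rw [this]
      refine le_trans (norm_sum_le _ _) ?_
      apply le_of_eq
      apply Finset.sum_congr rfl
      intro i _
      rw [norm_mul, Complex.norm_real, Real.norm_eq_abs]
    have hTbound : (∑ x : Fin n → ZMod p, ∑ z : Fin n → ZMod p, ‖(XZ p n x z * ρ).trace‖)
        ≤ R * (p : ℝ) ^ n := by
      calc (∑ x : Fin n → ZMod p, ∑ z : Fin n → ZMod p, ‖(XZ p n x z * ρ).trace‖)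
          ≤ ∑ x : Fin n → ZMod p, ∑ z : Fin n → ZMod p,
              ∑ i, |c i| * ‖(XZ p n x z * σs i).trace‖ := by
            apply Finset.sum_le_sum; intro x _
            apply Finset.sum_le_sum; intro z _
            exact hbound x z
        _ = ∑ i, |c i| * ∑ x : Fin n → ZMod p, ∑ z : Fin n → ZMod p,
              ‖(XZ p n x z * σs i).trace‖ := by
            have hswap : ∀ x : Fin n → ZMod p,
                (∑ z : Fin n → ZMod p, ∑ i, |c i| * ‖(XZ p n x z * σs i).trace‖)
                = ∑ i, ∑ z : Fin n → ZMod p, |c i| * ‖(XZ p n x z * σs i).trace‖ :=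
              fun x => Finset.sum_comm
            simp only [hswap]
            rw [Finset.sum_comm]
            apply Finset.sum_congr rfl; intro i _
            rw [Finset.mul_sum]
            apply Finset.sum_congr rfl; intro x _
            rw [Finset.mul_sum]
        _ = ∑ i, |c i| * (p : ℝ) ^ n := by
            apply Finset.sum_congr rfl; intro i _
            rw [stab_sum _ (hσ i)]
        _ = R * (p : ℝ) ^ n := by rw [← Finset.sum_mul]
    rw [stNorm]
    calc (1 / (p : ℝ) ^ n) *
        ∑ x : Fin n → ZMod p, ∑ z : Fin n → ZMod p, ‖(XZ p n x z * ρ).trace‖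
        ≤ (1 / (p : ℝ) ^ n) * (R * (p : ℝ) ^ n) := by
          apply mul_le_mul_of_nonneg_left hTbound
          positivity
      _ = R := by field_simp
  -- Part 2: rewrite everything through T = Σ_P |⟨ψ|P|ψ⟩|
  have hne1 : (p : ℝ) ≠ 1 := by linarith
  have htr : ∀ x z : Fin n → ZMod p,
      (XZ p n x z * ρ).trace = star ψ ⬝ᵥ (XZ p n x z).mulVec ψ :=
    fun x z => trace_mul_vecMulVec _ _
  set T := ∑ x : Fin n → ZMod p, ∑ z : Fin n → ZMod p,
      ‖star ψ ⬝ᵥ (XZ p n x z).mulVec ψ‖ with hTdef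
  have hstn : stNorm p n ρ = (1 / (p : ℝ) ^ n) * T := by
    rw [stNorm, hTdef]
    congr 1
    apply Finset.sum_congr rfl; intro x _
    apply Finset.sum_congr rfl; intro z _
    rw [htr]
  have hid : ‖star ψ ⬝ᵥ (XZ p n 0 0).mulVec ψ‖ = 1 := by
    rw [XZ_zero, Matrix.one_mulVec]
    have : star ψ ⬝ᵥ ψ = ((∑ i, ‖ψ i‖ ^ 2 : ℝ) : ℂ) := by
      push_cast
      simp only [dotProduct, Pi.star_apply, RCLike.star_def]
      apply Finset.sum_congr rfl; intro i _
      rw [mul_comm, Complex.mul_conj']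
    rw [this, hunit]
    simp
  have hT1 : (1 : ℝ) ≤ T := by
    rw [hTdef]
    calc (1 : ℝ) = ‖star ψ ⬝ᵥ (XZ p n 0 0).mulVec ψ‖ := hid.symm
      _ ≤ ∑ z : Fin n → ZMod p, ‖star ψ ⬝ᵥ (XZ p n 0 z).mulVec ψ‖ :=
          Finset.single_le_sum
            (f := fun z => ‖star ψ ⬝ᵥ (XZ p n 0 z).mulVec ψ‖)
            (fun z _ => norm_nonneg _) (Finset.mem_univ 0)
      _ ≤ ∑ x : Fin n → ZMod p, ∑ z : Fin n → ZMod p, ‖star ψ ⬝ᵥ (XZ p n x z).mulVec ψ‖ :=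
          Finset.single_le_sum
            (f := fun x => ∑ z : Fin n → ZMod p, ‖star ψ ⬝ᵥ (XZ p n x z).mulVec ψ‖)
            (fun x _ => Finset.sum_nonneg fun z _ => norm_nonneg _) (Finset.mem_univ 0)
  have hT0 : (0 : ℝ) < T := by linarith
  have hD0 : 0 < stNorm p n ρ := by
    rw [hstn]
    have : (0:ℝ) < 1 / (p : ℝ) ^ n := by positivity
    exact mul_pos this hT0
  have hR0 : 0 < R := lt_of_lt_of_le hD0 h1
  have h1n : (1 : ℝ) / (p : ℝ) ^ n = (p : ℝ) ^ (-(n : ℝ)) := by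
    rw [Real.rpow_neg hp0.le, Real.rpow_natCast, one_div]
  have hXi : ∀ x z : Fin n → ZMod p, Xi p n ψ x z ^ ((1 : ℝ) / 2)
      = Real.sqrt (1 / (p : ℝ) ^ n) * ‖star ψ ⬝ᵥ (XZ p n x z).mulVec ψ‖ := by
    intro x z
    rw [Xi, ← Real.sqrt_eq_rpow, Real.sqrt_mul (by positivity), Real.sqrt_sq (norm_nonneg _)]
  have hsumXi : ∑ x : Fin n → ZMod p, ∑ z : Fin n → ZMod p, Xi p n ψ x z ^ ((1 : ℝ) / 2)
      = Real.sqrt (1 / (p : ℝ) ^ n) * T := by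
    rw [hTdef, Finset.mul_sum]
    apply Finset.sum_congr rfl; intro x _
    rw [Finset.mul_sum]
    apply Finset.sum_congr rfl; intro z _
    exact hXi x z
  have hsqrt : Real.sqrt ((1 : ℝ) / (p : ℝ) ^ n) = (p : ℝ) ^ (-(n : ℝ) * (1 / 2)) := by
    rw [h1n, Real.sqrt_eq_rpow, ← Real.rpow_mul hp0.le]
  have hMren : Mren p (1 / 2) n ψ = 2 * Real.logb p T - 2 * n := by
    rw [Mren, hsumXi, hsqrt,
      Real.logb_mul (by positivity) (by linarith), Real.logb_rpow hp0 hne1]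
    norm_num
    ring
  have hMren2 : Mren p (1 / 2) n ψ = 2 * Real.logb p (stNorm p n ρ) := by
    rw [hMren, hstn, Real.logb_mul (by positivity) (by linarith), h1n,
      Real.logb_rpow hp0 hne1]
    push_cast; ring
  have h2 : Mren p (1 / 2) n ψ ≤ 2 * Real.logb p R := by
    rw [hMren2]
    have := Real.logb_le_logb_of_le hpR hD0 h1
    linarith
  have h3 : (p : ℝ) ^ (Mren p (1 / 2) n ψ) ≤ R ^ 2 := by
    rw [hMren2]
    have key : (p : ℝ) ^ (2 * Real.logb p (stNorm p n ρ)) = (stNorm p n ρ) ^ 2 := by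
      rw [mul_comm, Real.rpow_mul hp0.le, Real.rpow_logb hp0 hne1 hD0,
        show (2 : ℝ) = ((2 : ℕ) : ℝ) by norm_num, Real.rpow_natCast]
    rw [key]
    exact pow_le_pow_left₀ hD0.le h1 2
  exact ⟨h1, h2, h3⟩
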